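/- If a configuration C is a combination of configurations A and B, and A' is a configuration dominating A and B' is a configuration dominating B, then some combination of A' and B' dominates C. (Property of dominating configurations.) -/
import Mathlib
namespace RoundElim

/-- The configuration (multiset of cardinality `δ`) associated to a function `Fin δ → α`. -/
def ofFn {α : Type*} {δ : ℕ} (f : Fin δ → α) : Multiset α :=
  (List.ofFn f : List α)

variable {σ : Type*} [DecidableEq σ]

/-- `DominatedBy A B` means: configuration `B` dominates configuration `A`. -/
def DominatedBy (A B : Multiset (Finset σ)) : Prop :=
  Multiset.Rel (· ⊆ ·) A B

/-- `StrictlyDominatedBy A B` means: configuration `B` strictly dominates configuration `A`. -/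
def StrictlyDominatedBy (A B : Multiset (Finset σ)) : Prop :=
  DominatedBy A B ∧ ¬ DominatedBy B A

/-- The combination of the representatives `a`, `b` with respect to the permutation `φ`
and the index `u`: union at position `u`, intersection everywhere else. -/
def combineFn {δ : ℕ} (a b : Fin δ → Finset σ) (φ : Equiv.Perm (Fin δ)) (u : Fin δ) :
    Fin δ → Finset σ :=
  fun i => if i = u then a i ∪ b (φ i) else a i ∩ b (φ i)

/-- `C` is a combination of the configurations `A` and `B`. -/
def IsCombination (δ : ℕ) (C A B : Multiset (Finset σ)) : Prop :=
  ∃ (a b : Fin δ → Finset σ) (φ : Equiv.Perm (Fin δ)) (u : Fin δ),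
    ofFn a = A ∧ ofFn b = B ∧ ofFn (combineFn a b φ u) = C

/-- `C` satisfies the universal quantifier w.r.t. the edge constraint `E`. -/
def SatUQ (E : Set (Multiset σ)) (C : Multiset (Finset σ)) : Prop :=
  ∀ M : Multiset σ, Multiset.Rel (· ∈ ·) M C → M ∈ E

/-- A singleton configuration: all its sets have exactly one element. -/
def IsSingletonConfig (C : Multiset (Finset σ)) : Prop :=
  ∀ s ∈ C, s.card = 1

/-- The combination-closure of a set `Γ` of configurations: the smallest set containing `Γ`
and containing every combination of two of its members. -/
inductive CombClosure (δ : ℕ) (Γ : Set (Multiset (Finset σ))) :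
    Multiset (Finset σ) → Prop
  | base {C : Multiset (Finset σ)} : C ∈ Γ → CombClosure δ Γ C
  | comb {A B C : Multiset (Finset σ)} : CombClosure δ Γ A → CombClosure δ Γ B →
      IsCombination δ C A B → CombClosure δ Γ C

private lemma rel_coe_left {α β : Type*} {r : α → β → Prop} :
    ∀ {l : List α} {m : Multiset β}, Multiset.Rel r ↑l m →
      ∃ l' : List β, m = ↑l' ∧ List.Forall₂ r l l'
  | [], m, h => by
    rw [Multiset.coe_nil, Multiset.rel_zero_left] at h
    exact ⟨[], by simp [h], List.Forall₂.nil⟩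
  | a :: as, m, h => by
    rw [show ((a :: as : List α) : Multiset α) = a ::ₘ ↑as from rfl,
      Multiset.rel_cons_left] at h
    obtain ⟨b, bs, hab, hrel, rfl⟩ := h
    obtain ⟨l', rfl, hf⟩ := rel_coe_left hrel
    exact ⟨b :: l', by simp, List.Forall₂.cons hab hf⟩

private lemma rel_of_forall₂ {α β : Type*} {r : α → β → Prop} :
    ∀ {l : List α} {l' : List β}, List.Forall₂ r l l' → Multiset.Rel r ↑l ↑l'
  | _, _, List.Forall₂.nil => Multiset.Rel.zero
  | _, _, List.Forall₂.cons h t => Multiset.Rel.cons h (rel_of_forall₂ t)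

private lemma exists_fn {δ : ℕ} {a : Fin δ → Finset σ} {M : Multiset (Finset σ)}
    (h : Multiset.Rel (· ⊆ ·) (ofFn a) M) :
    ∃ g : Fin δ → Finset σ, ofFn g = M ∧ ∀ i, a i ⊆ g i := by
  obtain ⟨l', rfl, hf⟩ := rel_coe_left h
  have hlen : l'.length = δ := by
    have := hf.length_eq; simpa using this.symm
  refine ⟨fun i => l'.get (Fin.cast hlen.symm i), ?_, ?_⟩
  · show ((List.ofFn _ : List (Finset σ)) : Multiset (Finset σ)) = _
    congr 1
    exact List.ext_get (by simp [hlen]) (by intro i h1 h2; simp)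
  · intro i
    have := hf.get (x := List.ofFn a) (y := l') (i := i)
      (by simpa using i.isLt) (by simpa [hlen] using i.isLt)
    simpa using this

theorem dominating_combination {σ : Type*} [Fintype σ] [DecidableEq σ] (δ : ℕ) (hδ : 0 < δ)
    (A B C A' B' : Multiset (Finset σ))
    (hC : IsCombination δ C A B) (hA : DominatedBy A A') (hB : DominatedBy B B') :
    ∃ C' : Multiset (Finset σ), IsCombination δ C' A' B' ∧ DominatedBy C C' := by
  obtain ⟨a, b, φ, u, rfl, rfl, rfl⟩ := hC
  obtain ⟨a', hA', ha⟩ := exists_fn hA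
  obtain ⟨b', hB', hb⟩ := exists_fn hB
  refine ⟨ofFn (combineFn a' b' φ u), ⟨a', b', φ, u, hA', hB', rfl⟩, ?_⟩
  exact rel_of_forall₂ <| List.forall₂_of_length_eq_of_get (by simp) fun i h1 h2 => by
    simp only [List.get_ofFn, combineFn, Fin.cast_mk]
    split
    · exact Finset.union_subset_union (ha _) (hb _)
    · exact Finset.inter_subset_inter (ha _) (hb _)

end RoundElim
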